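/- Let r ≠ 0. Two elements t^r · ι(u) and t^s · ι(v) of G (with s ∈ ℤ and u, v ∈ F) are conjugate in G if and only if r = s and there exists an integer k with 0 ≤ k ≤ |r| − 1 such that φ^k(u) is φ^r-twisted conjugate to v. -/

import Mathlib

/-- `u` and `v` are `φ`-twisted conjugate: there is `g` with `v = (φ g)⁻¹ * u * g`. -/
def TwistedConj {F : Type*} [Group F] (φ : MulAut F) (u v : F) : Prop :=
  ∃ g : F, v = (φ g)⁻¹ * u * g

section Aux

variable {F : Type*} [Group F]

lemma TwistedConj.refl (φ : MulAut F) (u : F) : TwistedConj φ u u :=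
  ⟨1, by simp⟩

lemma TwistedConj.symm {φ : MulAut F} {u v : F} (h : TwistedConj φ u v) : TwistedConj φ v u := by
  obtain ⟨g, hg⟩ := h
  exact ⟨g⁻¹, by rw [hg]; simp [mul_assoc]⟩

lemma TwistedConj.trans {φ : MulAut F} {u v w : F} (h1 : TwistedConj φ u v)
    (h2 : TwistedConj φ v w) : TwistedConj φ u w := by
  obtain ⟨g, hg⟩ := h1
  obtain ⟨h, hh⟩ := h2
  exact ⟨g * h, by rw [hh, hg]; simp [mul_assoc]⟩

lemma zpow_apply_zpow_apply (φ : MulAut F) (a b : ℤ) (x : F) :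
    (φ ^ a) ((φ ^ b) x) = (φ ^ (a + b)) x := by
  rw [zpow_add]; rfl

/-- shifting by `r` is a twisted conjugacy for `φ ^ r`. -/
lemma twistedConj_shift (φ : MulAut F) (r n : ℤ) (u : F) :
    TwistedConj (φ ^ r) ((φ ^ n) u) ((φ ^ (n + r)) u) := by
  refine ⟨((φ ^ n) u)⁻¹, ?_⟩
  rw [map_inv, inv_inv, zpow_apply_zpow_apply, add_comm r n]
  simp

lemma twistedConj_shift_mul (φ : MulAut F) (r : ℤ) (u : F) (q : ℤ) (n : ℤ) :
    TwistedConj (φ ^ r) ((φ ^ n) u) ((φ ^ (n + q * r)) u) := by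
  induction q using Int.induction_on with
  | zero => simpa using TwistedConj.refl (φ ^ r) ((φ ^ n) u)
  | succ q ih =>
      have h := twistedConj_shift φ r (n + q * r) u
      have e : n + q * r + r = n + (q + 1 : ℤ) * r := by ring
      rw [e] at h
      exact ih.trans h
  | pred q ih =>
      have h := twistedConj_shift φ r (n + (-q - 1) * r) u
      have e : n + (-q - 1 : ℤ) * r + r = n + (-q : ℤ) * r := by ring
      rw [e] at h
      exact ih.trans h.symm

end Aux

section Main

variable {α : Type*} {G : Type*} [Group G]

lemma iota_mul_zpow (φ : MulAut (FreeGroup α)) (ι : FreeGroup α →* G) (t : G)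
    (ht : ∀ w : FreeGroup α, t⁻¹ * ι w * t = ι (φ w)) :
    ∀ (m : ℤ) (w : FreeGroup α), ι w * t ^ m = t ^ m * ι ((φ ^ m) w) := by
  have ht' : ∀ w : FreeGroup α, ι w * t = t * ι (φ w) := by
    intro w
    rw [← ht w]; group
  have ht'' : ∀ w : FreeGroup α, ι w * t⁻¹ = t⁻¹ * ι (φ⁻¹ w) := by
    intro w
    have := ht (φ⁻¹ w)
    rw [show φ (φ⁻¹ w) = w by simp] at this
    rw [← this]; group
  intro m
  induction m using Int.induction_on with
  | zero => simp
  | succ n ih =>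
      intro w
      have e1 : (φ ^ ((n : ℤ) + 1)) w = φ ((φ ^ (n : ℤ)) w) := by
        have h := zpow_apply_zpow_apply φ 1 (n : ℤ) w
        rw [zpow_one] at h
        rw [show (n : ℤ) + 1 = 1 + (n : ℤ) by ring, ← h]
      calc ι w * t ^ ((n : ℤ) + 1) = (ι w * t ^ (n : ℤ)) * t := by
            rw [zpow_add_one]; group
        _ = t ^ (n : ℤ) * ι ((φ ^ (n : ℤ)) w) * t := by rw [ih w]
        _ = t ^ (n : ℤ) * (ι ((φ ^ (n : ℤ)) w) * t) := by group
        _ = t ^ (n : ℤ) * (t * ι (φ ((φ ^ (n : ℤ)) w))) := by rw [ht']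
        _ = t ^ ((n : ℤ) + 1) * ι ((φ ^ ((n : ℤ) + 1)) w) := by
            rw [e1, zpow_add_one]; group
  | pred n ih =>
      intro w
      have e1 : (φ ^ (-(n : ℤ) - 1)) w = φ⁻¹ ((φ ^ (-(n : ℤ))) w) := by
        have h := zpow_apply_zpow_apply φ (-1) (-(n : ℤ)) w
        rw [zpow_neg_one] at h
        rw [show -(n : ℤ) - 1 = -1 + -(n : ℤ) by ring, ← h]
      calc ι w * t ^ (-(n : ℤ) - 1) = (ι w * t ^ (-(n : ℤ))) * t⁻¹ := by
            rw [zpow_sub_one]; group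
        _ = t ^ (-(n : ℤ)) * ι ((φ ^ (-(n : ℤ))) w) * t⁻¹ := by rw [ih w]
        _ = t ^ (-(n : ℤ)) * (ι ((φ ^ (-(n : ℤ))) w) * t⁻¹) := by group
        _ = t ^ (-(n : ℤ)) * (t⁻¹ * ι (φ⁻¹ ((φ ^ (-(n : ℤ))) w))) := by rw [ht'']
        _ = t ^ (-(n : ℤ) - 1) * ι ((φ ^ (-(n : ℤ) - 1)) w) := by
            rw [e1, zpow_sub_one]; group

lemma exists_decomp (φ : MulAut (FreeGroup α)) (ι : FreeGroup α →* G) (t : G)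
    (ht : ∀ w : FreeGroup α, t⁻¹ * ι w * t = ι (φ w))
    (hgen : Subgroup.closure (Set.range ι ∪ {t}) = ⊤) (c : G) :
    ∃ (m : ℤ) (g : FreeGroup α), c = t ^ m * ι g := by
  have hA := iota_mul_zpow φ ι t ht
  have hc : c ∈ Subgroup.closure (Set.range ι ∪ {t}) := by rw [hgen]; exact Subgroup.mem_top c
  induction hc using Subgroup.closure_induction with
  | mem x hx =>
      rcases hx with ⟨w, hw⟩ | hx
      · exact ⟨0, w, by simp [hw]⟩
      · exact ⟨1, 1, by simp at hx; simp [hx]⟩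
  | one => exact ⟨0, 1, by simp⟩
  | mul x y _ _ ihx ihy =>
      obtain ⟨m, g, rfl⟩ := ihx
      obtain ⟨n, h, rfl⟩ := ihy
      refine ⟨m + n, (φ ^ n) g * h, ?_⟩
      rw [map_mul, mul_assoc, ← mul_assoc (ι g), hA n g, zpow_add]
      group
  | inv x _ ihx =>
      obtain ⟨m, g, rfl⟩ := ihx
      refine ⟨-m, (φ ^ (-m)) g⁻¹, ?_⟩
      rw [← hA (-m) g⁻¹, map_inv]
      group

lemma conj_calc (φ : MulAut (FreeGroup α)) (ι : FreeGroup α →* G) (t : G)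
    (ht : ∀ w : FreeGroup α, t⁻¹ * ι w * t = ι (φ w)) (m r : ℤ) (g u : FreeGroup α) :
    (t ^ m * ι g) * (t ^ r * ι u) * (t ^ m * ι g)⁻¹
      = t ^ r * ι ((φ ^ (r - m)) g * (φ ^ (-m)) u * ((φ ^ (-m)) g)⁻¹) := by
  have hA := iota_mul_zpow φ ι t ht
  have e := hA r g
  have h1 : (t ^ m * ι g) * (t ^ r * ι u) * (t ^ m * ι g)⁻¹
      = t ^ (m + r) * (ι ((φ ^ r) g * u * g⁻¹) * t ^ (-m)) := by
    rw [map_mul, map_mul, map_inv, zpow_add]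
    calc t ^ m * ι g * (t ^ r * ι u) * (t ^ m * ι g)⁻¹
        = t ^ m * (ι g * t ^ r) * (ι u * ((ι g)⁻¹ * (t ^ m)⁻¹)) := by group
      _ = t ^ m * (t ^ r * ι ((φ ^ r) g)) * (ι u * ((ι g)⁻¹ * (t ^ m)⁻¹)) := by rw [e]
      _ = t ^ m * t ^ r * (ι ((φ ^ r) g) * ι u * (ι g)⁻¹ * t ^ (-m)) := by group
  rw [h1, hA (-m) ((φ ^ r) g * u * g⁻¹)]
  have e3 : (φ ^ (-m)) ((φ ^ r) g * u * g⁻¹)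
      = (φ ^ (r - m)) g * (φ ^ (-m)) u * ((φ ^ (-m)) g)⁻¹ := by
    rw [map_mul, map_mul, map_inv, zpow_apply_zpow_apply, show -m + r = r - m by ring]
  rw [e3]
  group

end Main

/-- For `r ≠ 0`, the elements `t^r * ι u` and `t^s * ι v` of the [f.g. free]-by-(infinite
cyclic) group `G` are conjugate iff `r = s` and `φ^k u` is `φ^r`-twisted conjugate to `v`
for some integer `0 ≤ k ≤ |r| - 1`. -/
theorem isConj_iff_twistedConj_bounded {α : Type*} {G : Type*} [Group G]
    (φ : MulAut (FreeGroup α)) (ι : FreeGroup α →* G) (hι : Function.Injective ι)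
    (t : G) (ht : ∀ w : FreeGroup α, t⁻¹ * ι w * t = ι (φ w))
    (hgen : Subgroup.closure (Set.range ι ∪ {t}) = ⊤)
    (htor : ∀ k : ℤ, t ^ k ∈ Set.range ι → k = 0)
    (r s : ℤ) (hr : r ≠ 0) (u v : FreeGroup α) :
    IsConj (t ^ r * ι u) (t ^ s * ι v) ↔
      r = s ∧ ∃ k : ℤ, 0 ≤ k ∧ k ≤ |r| - 1 ∧ TwistedConj (φ ^ r) ((φ ^ k) u) v := by
  have habs : 0 < |r| := abs_pos.mpr hr
  rw [isConj_iff]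
  constructor
  · rintro ⟨c, hc⟩
    obtain ⟨m, g, rfl⟩ := exists_decomp φ ι t ht hgen c
    have hconj : (t ^ m * ι g) * (t ^ r * ι u) * (t ^ m * ι g)⁻¹ = t ^ s * ι v := hc
    rw [conj_calc φ ι t ht] at hconj
    set X : FreeGroup α := (φ ^ (r - m)) g * (φ ^ (-m)) u * ((φ ^ (-m)) g)⁻¹ with hX
    have hrs : r = s := by
      have h3 : ι X = (t ^ r)⁻¹ * (t ^ s * ι v) := by rw [← hconj]; group
      have h2 : t ^ (s - r) = ι (X * v⁻¹) := by
        rw [map_mul, map_inv, h3]; group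
      have := htor (s - r) ⟨X * v⁻¹, h2.symm⟩
      omega
    subst hrs
    have hXv : X = v := hι (mul_left_cancel hconj)
    have htc : TwistedConj (φ ^ r) ((φ ^ (-m)) u) v := by
      refine ⟨((φ ^ (-m)) g)⁻¹, ?_⟩
      rw [← hXv, hX, map_inv, inv_inv, zpow_apply_zpow_apply,
        show r + -m = r - m by ring]
    set k : ℤ := (-m) % |r| with hk
    have hk0 : 0 ≤ k := Int.emod_nonneg _ (by omega)
    have hklt : k < |r| := Int.emod_lt_of_pos _ habs
    have hdecomp : -m = k + ((-m) / |r|) * |r| := by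
      rw [hk]
      linarith [Int.mul_ediv_add_emod (-m) |r|, mul_comm (|r|) ((-m) / |r|)]
    obtain ⟨q, hq⟩ : ∃ q : ℤ, -m = k + q * r := by
      rcases abs_cases r with ⟨ha, _⟩ | ⟨ha, _⟩
      · exact ⟨(-m) / |r|, by
          calc -m = k + (-m) / |r| * |r| := hdecomp
            _ = k + (-m) / |r| * r := by rw [ha]⟩
      · exact ⟨-((-m) / |r|), by
          calc -m = k + (-m) / |r| * |r| := hdecomp
            _ = k + -((-m) / |r|) * r := by rw [ha]; ring⟩
    have hshift := twistedConj_shift_mul φ r u q k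
    rw [← hq] at hshift
    exact ⟨rfl, k, hk0, by omega, hshift.trans htc⟩
  · rintro ⟨rfl, k, -, -, g, hg⟩
    refine ⟨t ^ (-k) * ι ((φ ^ (-k)) g⁻¹), ?_⟩
    have hcalc := conj_calc φ ι t ht (-k) r ((φ ^ (-k)) g⁻¹) u
    have hX' : (φ ^ (r - -k)) ((φ ^ (-k)) g⁻¹) * (φ ^ (- -k)) u
        * ((φ ^ (- -k)) ((φ ^ (-k)) g⁻¹))⁻¹ = v := by
      rw [zpow_apply_zpow_apply, zpow_apply_zpow_apply, neg_neg,
        show r - -k + -k = r by ring, show (k : ℤ) + -k = 0 by ring, zpow_zero,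
        map_inv, map_inv]
      simp only [MulAut.one_apply, inv_inv]
      rw [hg]
    rw [hX'] at hcalc
    exact hcalc
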